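/- Let a ∈ ℝ^K be a random vector with covariance Σ = E[a a^T] and suppose E[(a^T u)⁴] ≤ C₁ (u^T Σ u)² for all unit u and E[‖a‖⁴] ≤ C₂ (tr Σ)². Set X := a a^T − Σ. Then for every unit u, u^T E[X²] u ≤ √(C₁ C₂) · (tr Σ) · (u^T Σ u); i.e. E[X²] ⪯ √(C₁ C₂) (tr Σ) Σ in the Loewner order. -/

import Mathlib

open Matrix MeasureTheory

lemma alg_rearrange {K : ℕ} (b u : Fin K → ℝ) (S : Matrix (Fin K) (Fin K) ℝ) :
    ∑ i, ∑ j, (u i * u j) * ∑ l, (b i * b l - S i l) * (b l * b j - S l j)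
      = ∑ l, (∑ i, u i * (b i * b l - S i l)) * (∑ j, u j * (b l * b j - S l j)) := by
  simp_rw [Finset.sum_mul_sum, Finset.mul_sum]
  refine Eq.trans (Finset.sum_congr rfl fun i _ => Finset.sum_comm) ?_
  rw [Finset.sum_comm]
  refine Finset.sum_congr rfl fun l _ => Finset.sum_congr rfl fun i _ =>
    Finset.sum_congr rfl fun j _ => by ring

/-- Variance proxy bound: let `a` be a random vector with covariance
`Σ = E[a aᵀ]`, `E[(aᵀu)⁴] ≤ C₁ (uᵀΣu)²` for all unit `u`, and
`E[‖a‖⁴] ≤ C₂ (tr Σ)²`. With `X = a aᵀ − Σ`, for every unit `u`,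
`uᵀ E[X²] u ≤ √(C₁ C₂) (tr Σ) (uᵀ Σ u)`. -/
theorem variance_proxy_bound {Ω : Type*} [MeasurableSpace Ω] (μ : Measure Ω)
    [IsProbabilityMeasure μ] {K : ℕ} (a : Ω → Fin K → ℝ) (hmeas : Measurable a)
    (hint : ∀ i j k l : Fin K, Integrable (fun ω => a ω i * a ω j * a ω k * a ω l) μ)
    (Sig : Matrix (Fin K) (Fin K) ℝ)
    (hSig : ∀ i j, Sig i j = ∫ ω, a ω i * a ω j ∂μ)
    (C₁ C₂ : ℝ) (hC₁ : 0 ≤ C₁) (hC₂ : 0 ≤ C₂)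
    (h4 : ∀ u : Fin K → ℝ, (∑ i, (u i) ^ 2 = 1) →
      ∫ ω, (∑ i, a ω i * u i) ^ 4 ∂μ ≤ C₁ * (u ⬝ᵥ Sig.mulVec u) ^ 2)
    (hn4 : ∫ ω, (∑ i, (a ω i) ^ 2) ^ 2 ∂μ ≤ C₂ * Sig.trace ^ 2)
    (u : Fin K → ℝ) (hu : ∑ i, (u i) ^ 2 = 1) :
    u ⬝ᵥ (Matrix.of fun i j =>
        ∫ ω, ∑ l, (a ω i * a ω l - Sig i l) * (a ω l * a ω j - Sig l j) ∂μ).mulVec u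
      ≤ Real.sqrt (C₁ * C₂) * Sig.trace * (u ⬝ᵥ Sig.mulVec u) := by
  have hma : ∀ i, Measurable fun ω => a ω i := fun i => (measurable_pi_apply i).comp hmeas
  -- second moments are integrable
  have I2 : ∀ i j, Integrable (fun ω => a ω i * a ω j) μ := by
    intro i j
    have hsq : Integrable (fun ω => (a ω i * a ω j) ^ 2) μ :=
      (hint i j i j).congr (Filter.Eventually.of_forall fun ω => by ring)
    have hm : AEStronglyMeasurable (fun ω => a ω i * a ω j) μ :=
      ((hma i).mul (hma j)).aestronglyMeasurable
    exact ((memLp_two_iff_integrable_sq hm).mpr hsq).integrable (by norm_num)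
  have hSymm : ∀ i j, Sig i j = Sig j i := by
    intro i j; rw [hSig, hSig]; simp_rw [mul_comm]
  set S : Ω → ℝ := fun ω => ∑ i, a ω i * u i with hS
  set n : Ω → ℝ := fun ω => ∑ i, (a ω i) ^ 2 with hn
  set c : Fin K → ℝ := fun l => ∑ j, Sig l j * u j with hc
  -- integrability facts
  have hIsal : ∀ l, Integrable (fun ω => S ω * a ω l) μ := by
    intro l
    have : (fun ω => S ω * a ω l) = fun ω => ∑ i, u i * (a ω i * a ω l) := by
      funext ω; rw [hS, Finset.sum_mul]; exact Finset.sum_congr rfl fun i _ => by ring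
    rw [this]
    exact integrable_finset_sum _ fun i _ => (I2 i l).const_mul _
  have hintSal : ∀ l, ∫ ω, S ω * a ω l ∂μ = c l := by
    intro l
    have : (fun ω => S ω * a ω l) = fun ω => ∑ i, u i * (a ω i * a ω l) := by
      funext ω; rw [hS, Finset.sum_mul]; exact Finset.sum_congr rfl fun i _ => by ring
    rw [this, integral_finset_sum _ fun i _ => (I2 i l).const_mul _]
    simp_rw [integral_const_mul, ← hSig]
    rw [hc]
    exact Finset.sum_congr rfl fun i _ => by rw [hSymm l i]; ring
  have hIs2a2 : ∀ l, Integrable (fun ω => S ω ^ 2 * (a ω l) ^ 2) μ := by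
    intro l
    have : (fun ω => S ω ^ 2 * (a ω l) ^ 2)
        = fun ω => ∑ i, ∑ j, (u i * u j) * (a ω i * a ω j * a ω l * a ω l) := by
      funext ω
      rw [hS, sq, Finset.sum_mul_sum]
      rw [Finset.sum_mul]
      refine Finset.sum_congr rfl fun i _ => ?_
      rw [Finset.sum_mul]
      exact Finset.sum_congr rfl fun j _ => by ring
    rw [this]
    exact integrable_finset_sum _ fun i _ =>
      integrable_finset_sum _ fun j _ => (hint i j l l).const_mul _
  have hIs2n : Integrable (fun ω => S ω ^ 2 * n ω) μ := by
    have : (fun ω => S ω ^ 2 * n ω) = fun ω => ∑ l, S ω ^ 2 * (a ω l) ^ 2 := by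
      funext ω; rw [hn, Finset.mul_sum]
    rw [this]
    exact integrable_finset_sum _ fun l _ => hIs2a2 l
  have hstep : ∀ f : Ω → ℝ, (∀ i, Integrable (fun ω => f ω * a ω i) μ) →
      Integrable (fun ω => f ω * S ω) μ := by
    intro f hf
    have : (fun ω => f ω * S ω) = fun ω => ∑ i, u i * (f ω * a ω i) := by
      funext ω; rw [hS]; simp only []; rw [Finset.mul_sum]
      exact Finset.sum_congr rfl fun i _ => by ring
    rw [this]
    exact integrable_finset_sum _ fun i _ => (hf i).const_mul _
  have T1 : ∀ i j k, Integrable (fun ω => a ω i * a ω j * a ω k * S ω) μ :=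
    fun i j k => hstep _ fun l => hint i j k l
  have T2 : ∀ i j, Integrable (fun ω => a ω i * a ω j * S ω * S ω) μ := by
    intro i j
    refine hstep _ fun k => (T1 i j k).congr (Filter.Eventually.of_forall fun ω => by ring)
  have T3 : ∀ i, Integrable (fun ω => a ω i * S ω * S ω * S ω) μ := by
    intro i
    refine hstep _ fun j => (T2 i j).congr (Filter.Eventually.of_forall fun ω => by ring)
  have T4 : Integrable (fun ω => S ω * S ω * S ω * S ω) μ := by
    refine hstep _ fun i => (T3 i).congr (Filter.Eventually.of_forall fun ω => by ring)
  have hIs4 : Integrable (fun ω => S ω ^ 4) μ :=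
    T4.congr (Filter.Eventually.of_forall fun ω => by ring)
  have hIn2 : Integrable (fun ω => n ω ^ 2) μ := by
    have : (fun ω => n ω ^ 2) = fun ω => ∑ k, ∑ l, a ω k * a ω k * a ω l * a ω l := by
      funext ω
      rw [hn, sq, Finset.sum_mul_sum]
      exact Finset.sum_congr rfl fun k _ => Finset.sum_congr rfl fun l _ => by ring
    rw [this]
    exact integrable_finset_sum _ fun k _ => integrable_finset_sum _ fun l _ => hint k k l l
  -- integrability of the matrix entries' integrands
  have hterm : ∀ i j l, Integrable
      (fun ω => (a ω i * a ω l - Sig i l) * (a ω l * a ω j - Sig l j)) μ := by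
    intro i j l
    have h1 : Integrable (fun ω => a ω i * a ω l * a ω l * a ω j
        - Sig l j * (a ω i * a ω l) - Sig i l * (a ω l * a ω j) + Sig i l * Sig l j) μ :=
      (((hint i l l j).sub ((I2 i l).const_mul _)).sub ((I2 l j).const_mul _)).add
        (integrable_const _)
    exact h1.congr (Filter.Eventually.of_forall fun ω => by ring)
  have hg : ∀ i j, Integrable
      (fun ω => ∑ l, (a ω i * a ω l - Sig i l) * (a ω l * a ω j - Sig l j)) μ :=
    fun i j => integrable_finset_sum _ fun l _ => hterm i j l
  -- the two linear factors
  have hfacL : ∀ (l : Fin K) ω, ∑ i, u i * (a ω i * a ω l - Sig i l) = S ω * a ω l - c l := by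
    intro l ω
    have : ∑ i, u i * (a ω i * a ω l - Sig i l)
        = (∑ i, a ω i * u i) * a ω l - ∑ i, Sig l i * u i := by
      rw [Finset.sum_mul, ← Finset.sum_sub_distrib]
      exact Finset.sum_congr rfl fun i _ => by rw [hSymm l i]; ring
    simpa [hS, hc] using this
  have hfacR : ∀ (l : Fin K) ω, ∑ j, u j * (a ω l * a ω j - Sig l j) = S ω * a ω l - c l := by
    intro l ω
    have : ∑ j, u j * (a ω l * a ω j - Sig l j)
        = (∑ j, a ω j * u j) * a ω l - ∑ j, Sig l j * u j := by
      rw [Finset.sum_mul, ← Finset.sum_sub_distrib]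
      exact Finset.sum_congr rfl fun j _ => by ring
    simpa [hS, hc] using this
  -- the quadratic form equals an integral
  have hLHS : u ⬝ᵥ (Matrix.of fun i j =>
        ∫ ω, ∑ l, (a ω i * a ω l - Sig i l) * (a ω l * a ω j - Sig l j) ∂μ).mulVec u
      = ∫ ω, ∑ l, (S ω * a ω l - c l) ^ 2 ∂μ := by
    calc u ⬝ᵥ (Matrix.of fun i j =>
        ∫ ω, ∑ l, (a ω i * a ω l - Sig i l) * (a ω l * a ω j - Sig l j) ∂μ).mulVec u
        = ∑ i, ∑ j, (u i * u j) *
            ∫ ω, ∑ l, (a ω i * a ω l - Sig i l) * (a ω l * a ω j - Sig l j) ∂μ := by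
          simp only [dotProduct, Matrix.mulVec, Matrix.of_apply]
          refine Finset.sum_congr rfl fun i _ => ?_
          rw [Finset.mul_sum]
          exact Finset.sum_congr rfl fun j _ => by ring
      _ = ∑ i, ∑ j, ∫ ω, (u i * u j) *
            ∑ l, (a ω i * a ω l - Sig i l) * (a ω l * a ω j - Sig l j) ∂μ := by
          refine Finset.sum_congr rfl fun i _ => Finset.sum_congr rfl fun j _ => ?_
          rw [integral_const_mul]
      _ = ∫ ω, ∑ i, ∑ j, (u i * u j) *
            ∑ l, (a ω i * a ω l - Sig i l) * (a ω l * a ω j - Sig l j) ∂μ := by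
          rw [integral_finset_sum _ fun i _ => integrable_finset_sum _ fun j _ =>
            (hg i j).const_mul _]
          exact Finset.sum_congr rfl fun i _ =>
            (integral_finset_sum _ fun j _ => (hg i j).const_mul _).symm
      _ = ∫ ω, ∑ l, (S ω * a ω l - c l) ^ 2 ∂μ := by
          refine integral_congr_ae (Filter.Eventually.of_forall fun ω => ?_)
          simp only [alg_rearrange, hfacL, hfacR, pow_two]
  -- per-coordinate values
  have hIl1 : ∀ l, Integrable
      (fun ω => S ω ^ 2 * a ω l ^ 2 - 2 * c l * (S ω * a ω l)) μ := fun l =>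
    (hIs2a2 l).sub ((hIsal l).const_mul (2 * c l))
  have hIl : ∀ l, Integrable (fun ω => (S ω * a ω l - c l) ^ 2) μ := fun l =>
    ((hIl1 l).add (integrable_const ((c l) ^ 2))).congr
      (Filter.Eventually.of_forall fun ω => by simp only [Pi.add_apply]; ring)
  have hvall : ∀ l, ∫ ω, (S ω * a ω l - c l) ^ 2 ∂μ
      = (∫ ω, S ω ^ 2 * (a ω l) ^ 2 ∂μ) - (c l) ^ 2 := by
    intro l
    have heq : (fun ω => (S ω * a ω l - c l) ^ 2)
        = fun ω => (S ω ^ 2 * (a ω l) ^ 2 - (2 * c l) * (S ω * a ω l)) + (c l) ^ 2 := by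
      funext ω; ring
    rw [heq, integral_add (hIl1 l) (integrable_const _),
      integral_sub (hIs2a2 l) ((hIsal l).const_mul _), integral_const_mul, hintSal l,
      integral_const]
    simp [measure_univ]
    ring
  have hsplit : ∫ ω, ∑ l, (S ω * a ω l - c l) ^ 2 ∂μ
      = (∫ ω, S ω ^ 2 * n ω ∂μ) - ∑ l, (c l) ^ 2 := by
    rw [integral_finset_sum _ fun l _ => hIl l]
    rw [Finset.sum_congr rfl fun l _ => hvall l, Finset.sum_sub_distrib]
    congr 1
    rw [← integral_finset_sum _ fun l _ => hIs2a2 l]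
    refine integral_congr_ae (Filter.Eventually.of_forall fun ω => ?_)
    simp [hn, Finset.mul_sum]
  -- nonnegativity of the quadratic form and the trace
  have hq : u ⬝ᵥ Sig.mulVec u = ∫ ω, S ω ^ 2 ∂μ := by
    calc u ⬝ᵥ Sig.mulVec u = ∑ i, ∑ j, (u i * u j) * ∫ ω, a ω i * a ω j ∂μ := by
          simp only [dotProduct, Matrix.mulVec]
          refine Finset.sum_congr rfl fun i _ => ?_
          rw [Finset.mul_sum]
          refine Finset.sum_congr rfl fun j _ => ?_
          rw [hSig]; ring
      _ = ∫ ω, ∑ i, ∑ j, (u i * u j) * (a ω i * a ω j) ∂μ := by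
          rw [integral_finset_sum _ fun i _ => integrable_finset_sum _ fun j _ =>
            (I2 i j).const_mul _]
          refine Finset.sum_congr rfl fun i _ => ?_
          rw [integral_finset_sum _ fun j _ => (I2 i j).const_mul _]
          exact Finset.sum_congr rfl fun j _ => (integral_const_mul _ _).symm
      _ = ∫ ω, S ω ^ 2 ∂μ := by
          refine integral_congr_ae (Filter.Eventually.of_forall fun ω => ?_)
          simp only [hS, sq, Finset.sum_mul_sum]
          exact Finset.sum_congr rfl fun i _ => Finset.sum_congr rfl fun j _ => by ring
  have hx : 0 ≤ u ⬝ᵥ Sig.mulVec u := hq ▸ integral_nonneg fun ω => sq_nonneg _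
  have htr : Sig.trace = ∫ ω, n ω ∂μ := by
    rw [Matrix.trace]
    simp only [Matrix.diag]
    rw [show ∑ i, Sig i i = ∑ i, ∫ ω, a ω i * a ω i ∂μ from
      Finset.sum_congr rfl fun i _ => hSig i i]
    rw [← integral_finset_sum _ fun i _ => I2 i i]
    refine integral_congr_ae (Filter.Eventually.of_forall fun ω => ?_)
    simp [hn, sq]
  have ht : 0 ≤ Sig.trace := by
    rw [htr]
    exact integral_nonneg fun ω => Finset.sum_nonneg fun i _ => sq_nonneg _
  -- Cauchy–Schwarz
  have hSm : Measurable S := by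
    rw [hS]; exact Finset.measurable_sum _ fun i _ => (hma i).mul_const _
  have hnm : Measurable n := by
    rw [hn]; exact Finset.measurable_sum _ fun i _ => (hma i).pow_const 2
  have hmem1 : MemLp (fun ω => S ω ^ 2) (ENNReal.ofReal 2) μ := by
    rw [show ENNReal.ofReal 2 = 2 by norm_num]
    refine (memLp_two_iff_integrable_sq (hSm.pow_const 2).aestronglyMeasurable).mpr ?_
    exact hIs4.congr (Filter.Eventually.of_forall fun ω => by ring)
  have hmem2 : MemLp n (ENNReal.ofReal 2) μ := by
    rw [show ENNReal.ofReal 2 = 2 by norm_num]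
    exact (memLp_two_iff_integrable_sq hnm.aestronglyMeasurable).mpr hIn2
  have hH := integral_mul_le_Lp_mul_Lq_of_nonneg
    (Real.HolderConjugate.two_two : Real.HolderConjugate 2 2)
    (Filter.Eventually.of_forall fun ω => sq_nonneg (S ω))
    (Filter.Eventually.of_forall fun ω => by
      rw [hn]; exact Finset.sum_nonneg fun i _ => sq_nonneg _)
    hmem1 hmem2
  have hrpow2 : ∀ x : ℝ, x ^ (2 : ℝ) = x ^ 2 := fun x => by
    rw [show (2 : ℝ) = ((2 : ℕ) : ℝ) by norm_num, Real.rpow_natCast]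
  have e1 : ∫ ω, (S ω ^ 2) ^ (2 : ℝ) ∂μ = ∫ ω, S ω ^ 4 ∂μ := by
    refine integral_congr_ae (Filter.Eventually.of_forall fun ω => ?_)
    simp only [hrpow2]; ring
  have e2 : ∫ ω, n ω ^ (2 : ℝ) ∂μ = ∫ ω, n ω ^ 2 ∂μ := by
    refine integral_congr_ae (Filter.Eventually.of_forall fun ω => ?_)
    simp only [hrpow2]
  rw [e1, e2] at hH
  have hH' : ∫ ω, S ω ^ 2 * n ω ∂μ
      ≤ Real.sqrt (∫ ω, S ω ^ 4 ∂μ) * Real.sqrt (∫ ω, n ω ^ 2 ∂μ) := by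
    calc ∫ ω, S ω ^ 2 * n ω ∂μ
        ≤ (∫ ω, S ω ^ 4 ∂μ) ^ (1 / (2 : ℝ)) * (∫ ω, n ω ^ 2 ∂μ) ^ (1 / (2 : ℝ)) := hH
      _ = _ := by rw [Real.sqrt_eq_rpow, Real.sqrt_eq_rpow]
  -- bounds from hypotheses
  have hS4le : ∫ ω, S ω ^ 4 ∂μ ≤ C₁ * (u ⬝ᵥ Sig.mulVec u) ^ 2 := by
    simp only [hS]; exact h4 u hu
  have hn4' : ∫ ω, n ω ^ 2 ∂μ ≤ C₂ * Sig.trace ^ 2 := by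
    simp only [hn]; exact hn4
  -- put everything together
  rw [hLHS, hsplit]
  calc (∫ ω, S ω ^ 2 * n ω ∂μ) - ∑ l, (c l) ^ 2
      ≤ ∫ ω, S ω ^ 2 * n ω ∂μ :=
        sub_le_self _ (Finset.sum_nonneg fun l _ => sq_nonneg _)
    _ ≤ Real.sqrt (∫ ω, S ω ^ 4 ∂μ) * Real.sqrt (∫ ω, n ω ^ 2 ∂μ) := hH'
    _ ≤ Real.sqrt (C₁ * (u ⬝ᵥ Sig.mulVec u) ^ 2) * Real.sqrt (C₂ * Sig.trace ^ 2) :=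
        mul_le_mul (Real.sqrt_le_sqrt hS4le) (Real.sqrt_le_sqrt hn4')
          (Real.sqrt_nonneg _) (Real.sqrt_nonneg _)
    _ = Real.sqrt (C₁ * C₂) * Sig.trace * (u ⬝ᵥ Sig.mulVec u) := by
        rw [← Real.sqrt_mul (by positivity)]
        rw [show C₁ * (u ⬝ᵥ Sig.mulVec u) ^ 2 * (C₂ * Sig.trace ^ 2)
          = (C₁ * C₂) * (Sig.trace * (u ⬝ᵥ Sig.mulVec u)) ^ 2 by ring]
        rw [Real.sqrt_mul (by positivity), Real.sqrt_sq (mul_nonneg ht hx)]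
        ring
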